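/- For each fixed N ≥ 1, the set of bond functions b : {0,…,N−1} → ℤ_{>0} such that 1/M_0 + 1/M_1 + ⋯ + 1/M_N ∈ ℤ is finite (where b_{−1} = b_N = 1 and M_i = lcm(b_{i−1}, b_i)). In other words, only finitely many sets of bonds on a totally ordered set of length N satisfy the necessary condition for the discrete LS algebra to be Gorenstein. -/

import Mathlib

open Finset MvPolynomial

/-- `Mf b i` is `M_i = lcm(b_{i-1}, b_i)`, with the convention `b_{-1} = 1`
(the convention `b_N = 1` is imposed as a hypothesis in the statements). -/
def Mf (b : ℕ → ℕ) (i : ℕ) : ℕ := Nat.lcm (if i = 0 then 1 else b (i - 1)) (b i)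

/-- An LS-path of degree `r` over the totally ordered set `{0, …, N}` with bonds `b`:
a function `π : {0,…,N} → ℚ` (modelled as `π : ℕ → ℚ` vanishing above `N`) with
nonnegative values, integrality `b_j·(π 0 + ⋯ + π j) ∈ ℤ` for all `0 ≤ j ≤ N-1`,
and total sum `π 0 + ⋯ + π N = r`. -/
def IsLSPath (N : ℕ) (b : ℕ → ℕ) (r : ℕ) (π : ℕ → ℚ) : Prop :=
  (∀ i, 0 ≤ π i) ∧ (∀ i, N < i → π i = 0) ∧
  (∀ j < N, ∃ k : ℤ, (b j : ℚ) * (∑ i ∈ Finset.range (j + 1), π i) = k) ∧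
  (∑ i ∈ Finset.range (N + 1), π i = r)

/-- `SuppLE π π'` says `max supp π ≤ min supp π'`:
every element of the support of `π` is `≤` every element of the support of `π'`. -/
def SuppLE (π π' : ℕ → ℚ) : Prop := ∀ i j, π i ≠ 0 → π' j ≠ 0 → i ≤ j

/-- Deleting the `j`-th term from a sum over `range (n+1)`. -/
lemma sum_delete (F : ℕ → ℚ) : ∀ n j : ℕ, j ≤ n →
    ∑ i ∈ Finset.range (n+1), F i
      = F j + ∑ i ∈ Finset.range n, F (if i < j then i else i + 1) := by
  intro n
  induction n with
  | zero => intro j hj; interval_cases j; simp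
  | succ n ih =>
    intro j hj
    rcases eq_or_lt_of_le hj with h | h
    · subst h
      rw [Finset.sum_range_succ]
      have h2 : ∀ i ∈ Finset.range (n+1), F (if i < n+1 then i else i+1) = F i := by
        intro i hi; rw [if_pos (Finset.mem_range.mp hi)]
      rw [Finset.sum_congr rfl h2]
      ring
    · have hj' : j ≤ n := Nat.lt_succ_iff.mp h
      rw [Finset.sum_range_succ, ih j hj', Finset.sum_range_succ, if_neg (by omega)]
      ring

/-- Functions bounded by `C` which equal `1` from `n` on form a finite set. -/
lemma bounded_finite (n C : ℕ) :
    {f : ℕ → ℕ | (∀ i, f i ≤ C) ∧ ∀ i, n ≤ i → f i = 1}.Finite := by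
  have hsub : {f : ℕ → ℕ | (∀ i, f i ≤ C) ∧ ∀ i, n ≤ i → f i = 1} ⊆
      (fun g : Fin n → ℕ => fun i => if h : i < n then g ⟨i, h⟩ else 1) ''
        (Set.univ.pi fun _ : Fin n => Set.Iic C) := by
    rintro f ⟨h1, h2⟩
    refine ⟨fun i => f i, fun i _ => h1 i, ?_⟩
    funext i; by_cases h : i < n
    · simp [h]
    · simp [h, h2 i (le_of_not_gt h)]
  exact Set.Finite.subset (Set.Finite.image _ (Set.Finite.pi fun _ => Set.finite_Iic C)) hsub

/-- Egyptian fractions: for fixed `n` and `q`, there are finitely many `n`-tuples of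
positive integers whose reciprocals sum to `q`. -/
lemma egyptian : ∀ n : ℕ, ∀ q : ℚ,
    {f : ℕ → ℕ | (∀ i, 0 < f i) ∧ (∀ i, n ≤ i → f i = 1) ∧
      ∑ i ∈ Finset.range n, (1:ℚ) / (f i) = q}.Finite := by
  intro n
  induction n with
  | zero =>
    intro q
    apply Set.Finite.subset (Set.finite_singleton (fun _ => 1))
    rintro f ⟨-, h2, -⟩
    exact funext fun i => h2 i (Nat.zero_le i)
  | succ n ih =>
    intro q
    by_cases hq : 0 < q
    · set B := ⌊((n:ℚ)+1)/q⌋₊ with hB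
      have cover : {f : ℕ → ℕ | (∀ i, 0 < f i) ∧ (∀ i, n+1 ≤ i → f i = 1) ∧
          ∑ i ∈ Finset.range (n+1), (1:ℚ) / (f i) = q} ⊆
          ⋃ j ∈ Finset.range (n+1), ⋃ v ∈ Finset.range (B+1),
            {f : ℕ → ℕ | ((∀ i, 0 < f i) ∧ (∀ i, n+1 ≤ i → f i = 1) ∧
              ∑ i ∈ Finset.range (n+1), (1:ℚ) / (f i) = q) ∧ f j = v} := by
        rintro f ⟨h1, h2, h3⟩
        have hne : (Finset.range (n+1)).Nonempty := ⟨0, by simp⟩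
        have havg : ∃ j ∈ Finset.range (n+1), q / ((n:ℚ)+1) ≤ 1 / (f j) := by
          apply Finset.exists_le_of_sum_le hne
          rw [h3, Finset.sum_const, Finset.card_range, nsmul_eq_mul]
          have hne0 : ((n:ℚ)+1) ≠ 0 := by positivity
          push_cast
          field_simp
          exact le_rfl
        obtain ⟨j, hj, hjle⟩ := havg
        have hfj : 0 < f j := h1 j
        have hfjQ : (0:ℚ) < (f j : ℚ) := by exact_mod_cast hfj
        have hle : ((f j : ℚ)) ≤ ((n:ℚ)+1)/q := by
          rw [div_le_div_iff₀ (by positivity) hfjQ] at hjle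
          rw [le_div_iff₀ hq]
          linarith
        have hjB : f j ≤ B := Nat.le_floor hle
        refine Set.mem_biUnion hj (Set.mem_biUnion ?_ ⟨⟨h1, h2, h3⟩, rfl⟩)
        exact Finset.mem_range.mpr (by omega)
      refine Set.Finite.subset ?_ cover
      refine Set.Finite.biUnion (Finset.finite_toSet _) fun j hj => ?_
      refine Set.Finite.biUnion (Finset.finite_toSet _) fun v hv => ?_
      have hjn : j ≤ n := Nat.lt_succ_iff.mp (Finset.mem_range.mp hj)
      set φ : (ℕ → ℕ) → (ℕ → ℕ) := fun f i => if i < j then f i else f (i+1) with hφ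
      apply Set.Finite.of_finite_image (f := φ)
      · apply Set.Finite.subset (ih (q - 1 / (v:ℚ)))
        rintro g ⟨f, ⟨⟨h1, h2, h3⟩, hfj⟩, rfl⟩
        refine ⟨fun i => by dsimp only [φ]; split <;> exact h1 _, ?_, ?_⟩
        · intro i hi
          have : ¬ i < j := by omega
          dsimp only [φ]; rw [if_neg this]
          exact h2 _ (by omega)
        · have hsd : ∑ i ∈ Finset.range (n+1), (1:ℚ) / (f i)
              = 1 / (f j) + ∑ i ∈ Finset.range n, (1:ℚ) / (f (if i < j then i else i + 1)) :=
            sum_delete (fun i => (1:ℚ) / (f i)) n j hjn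
          have heq : ∑ i ∈ Finset.range n, (1:ℚ) / (φ f i)
              = ∑ i ∈ Finset.range n, (1:ℚ) / (f (if i < j then i else i + 1)) := by
            apply Finset.sum_congr rfl
            intro i hi
            dsimp only [φ]; split <;> rfl
          rw [h3, hfj] at hsd
          rw [heq]
          linarith
      · rintro f ⟨⟨h1f, h2f, h3f⟩, hfj⟩ f' ⟨⟨h1f', h2f', h3f'⟩, hfj'⟩ hφeq
        funext i
        rcases lt_trichotomy i j with h | h | h
        · have := congrFun hφeq i
          dsimp only [φ] at this
          rwa [if_pos h, if_pos h] at this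
        · subst h; rw [hfj, hfj']
        · have := congrFun hφeq (i - 1)
          dsimp only [φ] at this
          rw [if_neg (by omega), if_neg (by omega)] at this
          have hii : i - 1 + 1 = i := by omega
          rwa [hii] at this
    · apply Set.Finite.subset (Set.finite_empty)
      rintro f ⟨h1, h2, h3⟩
      exfalso
      apply hq
      rw [← h3]
      apply Finset.sum_pos _ ⟨0, by simp⟩
      intro i hi
      have : (0:ℚ) < (f i : ℚ) := by exact_mod_cast h1 i
      positivity

lemma Mf_pos (b : ℕ → ℕ) (hb : ∀ i, 0 < b i) (i : ℕ) : 0 < Mf b i := by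
  have h1 : (if i = 0 then 1 else b (i-1)) ≠ 0 := by
    split
    · exact one_ne_zero
    · exact (hb _).ne'
  exact Nat.pos_of_ne_zero (Nat.lcm_ne_zero h1 (hb i).ne')

/-- For each fixed `N ≥ 1`, there are only finitely many sets of bonds
`b : {0,…,N-1} → ℤ_{>0}` (extended by the convention `b_i = 1` for `i ≥ N`) such that
`1/M_0 + 1/M_1 + ⋯ + 1/M_N ∈ ℤ`, i.e. satisfying the necessary condition for the
discrete LS algebra to be Gorenstein. -/
theorem stmt16 (N : ℕ) (hN : 1 ≤ N) :
    {b : ℕ → ℕ | (∀ i < N, 0 < b i) ∧ (∀ i, N ≤ i → b i = 1) ∧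
      ∃ k : ℤ, ∑ i ∈ Finset.range (N + 1), (1 : ℚ) / (Mf b i : ℚ) = k}.Finite := by
  classical
  have key : ∀ k : ℤ, {b : ℕ → ℕ | (∀ i < N, 0 < b i) ∧ (∀ i, N ≤ i → b i = 1) ∧
      ∑ i ∈ Finset.range (N + 1), (1 : ℚ) / (Mf b i : ℚ) = (k:ℚ)}.Finite := by
    intro k
    set E := {f : ℕ → ℕ | (∀ i, 0 < f i) ∧ (∀ i, N+1 ≤ i → f i = 1) ∧
      ∑ i ∈ Finset.range (N+1), (1:ℚ) / (f i) = (k:ℚ)} with hE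
    have hEfin : E.Finite := egyptian (N+1) (k:ℚ)
    have hT : (⋃ g ∈ E, Set.range g).Finite := by
      apply Set.Finite.biUnion hEfin
      intro g hg
      apply Set.Finite.subset (Set.Finite.insert 1 ((Set.finite_Iio (N+1)).image g))
      rintro x ⟨i, rfl⟩
      by_cases h : i < N + 1
      · exact Set.mem_insert_iff.mpr (Or.inr ⟨i, h, rfl⟩)
      · exact Set.mem_insert_iff.mpr (Or.inl (hg.2.1 i (le_of_not_gt h)))
    obtain ⟨C, hC⟩ := hT.bddAbove
    apply Set.Finite.subset (bounded_finite N (max C 1))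
    rintro b ⟨h1, h2, h3⟩
    have bpos : ∀ i, 0 < b i := by
      intro i
      by_cases h : i < N
      · exact h1 i h
      · rw [h2 i (le_of_not_gt h)]; exact one_pos
    have Mpos := Mf_pos b bpos
    have MfE : Mf b ∈ E := by
      refine ⟨Mpos, ?_, h3⟩
      intro i hi
      have hi0 : i ≠ 0 := by omega
      simp [Mf, hi0, h2 (i-1) (by omega), h2 i (by omega)]
    refine ⟨?_, h2⟩
    intro i
    by_cases h : i < N
    · have heq : Mf b (i+1) = Nat.lcm (b i) (b (i+1)) := by simp [Mf]
      have hle : b i ≤ Mf b (i+1) :=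
        Nat.le_of_dvd (Mpos _) (heq ▸ Nat.dvd_lcm_left _ _)
      have hmem : Mf b (i+1) ∈ ⋃ g ∈ E, Set.range g := Set.mem_biUnion MfE ⟨i+1, rfl⟩
      exact le_trans hle (le_trans (hC hmem) (le_max_left _ _))
    · rw [h2 i (le_of_not_gt h)]
      exact le_max_right _ _
  have cover : {b : ℕ → ℕ | (∀ i < N, 0 < b i) ∧ (∀ i, N ≤ i → b i = 1) ∧
      ∃ k : ℤ, ∑ i ∈ Finset.range (N + 1), (1 : ℚ) / (Mf b i : ℚ) = k} ⊆
      ⋃ k ∈ Finset.Icc (1:ℤ) (N+1), {b : ℕ → ℕ | (∀ i < N, 0 < b i) ∧ (∀ i, N ≤ i → b i = 1) ∧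
      ∑ i ∈ Finset.range (N + 1), (1 : ℚ) / (Mf b i : ℚ) = (k:ℚ)} := by
    rintro b ⟨h1, h2, k, hk⟩
    have bpos : ∀ i, 0 < b i := by
      intro i
      by_cases h : i < N
      · exact h1 i h
      · rw [h2 i (le_of_not_gt h)]; exact one_pos
    have Mpos := Mf_pos b bpos
    have MposQ : ∀ i, (0:ℚ) < (Mf b i : ℚ) := fun i => by exact_mod_cast Mpos i
    have hpos : (0:ℚ) < ∑ i ∈ Finset.range (N + 1), (1 : ℚ) / (Mf b i : ℚ) := by
      apply Finset.sum_pos _ ⟨0, by simp⟩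
      intro i _
      have := MposQ i
      positivity
    have hub : ∑ i ∈ Finset.range (N + 1), (1 : ℚ) / (Mf b i : ℚ) ≤ (N:ℚ)+1 := by
      calc ∑ i ∈ Finset.range (N + 1), (1 : ℚ) / (Mf b i : ℚ)
          ≤ ∑ _i ∈ Finset.range (N + 1), (1:ℚ) := by
            apply Finset.sum_le_sum
            intro i _
            rw [div_le_one (MposQ i)]
            exact_mod_cast Mpos i
        _ = (N:ℚ)+1 := by simp
    rw [hk] at hpos hub
    have hk1 : 1 ≤ k := by exact_mod_cast hpos
    have hk2 : k ≤ N+1 := by exact_mod_cast hub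
    exact Set.mem_biUnion (Finset.mem_Icc.mpr ⟨hk1, hk2⟩) ⟨h1, h2, hk⟩
  exact Set.Finite.subset (Set.Finite.biUnion (Finset.finite_toSet _) fun k _ => key k) cover
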